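/- Let E, Z be Banach spaces, D a normed linear space, K ⊆ Z a closed convex cone, X ⊆ E compact, Y ⊆ D, and g : X × Y → Z such that g(·, y) is continuous on X for every y ∈ Y. Then ȳ ∈ Y satisfies ∃ x ∈ X with g(x, ȳ) ⪯_K 0 if and only if inf_{x∈X}⟨u*, g(x, ȳ)⟩ ≤ 0 for every u* ∈ K⁺ with ‖u*‖ = 1. -/
import Mathlib

open Pointwise


/-- dual characterization of feasibility: `P(ȳ)` is feasible iff
`inf_{x∈X} ⟨u*, g(x,ȳ)⟩ ≤ 0` for every unit-norm `u* ∈ K⁺`. -/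
theorem stmt_13
    {E Z D : Type*} [NormedAddCommGroup E] [NormedSpace ℝ E] [CompleteSpace E]
    [NormedAddCommGroup Z] [NormedSpace ℝ Z] [CompleteSpace Z]
    [NormedAddCommGroup D] [NormedSpace ℝ D]
    (K : Set Z) (hKclosed : IsClosed K) (hKconv : Convex ℝ K)
    (hKcone : ∀ c : ℝ, 0 ≤ c → ∀ z ∈ K, c • z ∈ K)
    (X : Set E) (hX : Convex ℝ X) (hXcomp : IsCompact X) (hXne : X.Nonempty)
    (Y : Set D)
    (g : E → D → Z)
    (hgcont : ∀ y ∈ Y, ContinuousOn (fun x => g x y) X)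
    (hgconv : ∀ y ∈ Y, ∀ x₁ ∈ X, ∀ x₂ ∈ X, ∀ t ∈ Set.Icc (0:ℝ) 1,
      t • g x₁ y + (1 - t) • g x₂ y - g (t • x₁ + (1 - t) • x₂) y ∈ K)
    (Kplus : Set (Z →L[ℝ] ℝ)) (hKplus : Kplus = {u | ∀ z ∈ K, 0 ≤ u z})
    (yb : D) (hyb : yb ∈ Y) :
    (∃ x ∈ X, -g x yb ∈ K)
    ↔
    (∀ u ∈ Kplus, ‖u‖ = 1 →
      sInf ((fun x => ((u (g x yb) : ℝ) : EReal)) '' X) ≤ (0 : EReal)) := by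
  subst hKplus
  obtain ⟨x₀, hx₀⟩ := hXne
  -- 0 ∈ K
  have hK0 : (0 : Z) ∈ K := by
    have := hgconv yb hyb x₀ hx₀ x₀ hx₀ 0 ⟨le_refl _, zero_le_one⟩
    simpa using this
  -- K closed under addition
  have hKadd : ∀ a ∈ K, ∀ b ∈ K, a + b ∈ K := by
    intro a ha b hb
    have h := hKconv ha hb (by norm_num : (0:ℝ) ≤ 1/2) (by norm_num : (0:ℝ) ≤ 1/2)
      (by norm_num)
    have h2 := hKcone 2 (by norm_num) _ h
    have heq : (2:ℝ) • ((1/2 : ℝ) • a + (1/2 : ℝ) • b) = a + b := by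
      rw [smul_add, smul_smul, smul_smul]; norm_num
    rwa [heq] at h2
  constructor
  · rintro ⟨x, hx, hxK⟩ u hu hnorm
    have h1 : (0:ℝ) ≤ u (-g x yb) := hu _ hxK
    have h2 : (u (g x yb) : ℝ) ≤ 0 := by
      rw [map_neg] at h1; linarith
    calc sInf ((fun x => ((u (g x yb) : ℝ) : EReal)) '' X)
        ≤ ((u (g x yb) : ℝ) : EReal) := sInf_le ⟨x, hx, rfl⟩
      _ ≤ (0 : EReal) := by exact_mod_cast h2
  · intro hall
    by_contra hno
    push_neg at hno
    -- C = g(X, yb) + K is closed, convex, and 0 ∉ C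
    set S : Set Z := (fun x => g x yb) '' X with hS
    have hScomp : IsCompact S := hXcomp.image_of_continuousOn (hgcont yb hyb)
    set C : Set Z := S + K with hC
    have hgC : ∀ x ∈ X, g x yb ∈ C := fun x hx =>
      ⟨g x yb, ⟨x, hx, rfl⟩, 0, hK0, add_zero _⟩
    have hCclosed : IsClosed C := hKclosed.add_left_of_isCompact hScomp
    have hCconv : Convex ℝ C := by
      rintro z₁ ⟨s₁, ⟨x₁, hx₁, rfl⟩, k₁, hk₁, rfl⟩ z₂ ⟨s₂, ⟨x₂, hx₂, rfl⟩, k₂, hk₂, rfl⟩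
        a b ha hb hab
      have hb' : b = 1 - a := by linarith
      subst hb'
      have hxm : a • x₁ + (1 - a) • x₂ ∈ X := hX hx₁ hx₂ ha hb (by linarith)
      have hkm : a • g x₁ yb + (1 - a) • g x₂ yb - g (a • x₁ + (1 - a) • x₂) yb ∈ K :=
        hgconv yb hyb x₁ hx₁ x₂ hx₂ a ⟨ha, by linarith⟩
      have hk3 : a • k₁ ∈ K := hKcone a ha _ hk₁
      have hk4 : (1 - a) • k₂ ∈ K := hKcone _ hb _ hk₂
      refine ⟨g (a • x₁ + (1 - a) • x₂) yb, ⟨_, hxm, rfl⟩,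
        (a • g x₁ yb + (1 - a) • g x₂ yb - g (a • x₁ + (1 - a) • x₂) yb)
          + (a • k₁ + (1 - a) • k₂), hKadd _ hkm _ (hKadd _ hk3 _ hk4), ?_⟩
      simp only [smul_add]
      abel
    have h0C : (0 : Z) ∉ C := by
      rintro ⟨s, ⟨x, hx, rfl⟩, k, hk, hsum⟩
      refine hno x hx ?_
      have : -g x yb = k := by
        have := eq_neg_of_add_eq_zero_right hsum
        rw [this]
      rw [this]; exact hk
    obtain ⟨f, c, hf0, hfC⟩ := geometric_hahn_banach_point_closed hCconv hCclosed h0C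
    have hc0 : 0 < c := by simpa using hf0
    have hfx₀ : c < f (g x₀ yb) := hfC _ (hgC x₀ hx₀)
    -- f ∈ K⁺
    have hfK : ∀ z ∈ K, 0 ≤ f z := by
      intro k hk
      by_contra hneg
      push_neg at hneg
      have hden : 0 < -f k := by linarith
      set t : ℝ := (f (g x₀ yb) - c) / (-f k) + 1 with ht
      have ht0 : 0 ≤ t := by
        rw [ht]
        have := div_nonneg (by linarith : (0:ℝ) ≤ f (g x₀ yb) - c) hden.le
        linarith
      have hmem : g x₀ yb + t • k ∈ C :=
        ⟨g x₀ yb, ⟨x₀, hx₀, rfl⟩, t • k, hKcone t ht0 _ hk, rfl⟩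
      have hlt := hfC _ hmem
      rw [map_add, map_smul] at hlt
      have key : ((f (g x₀ yb) - c) / (-f k)) * (-f k) = f (g x₀ yb) - c :=
        div_mul_cancel₀ _ hden.ne'
      have hsm : t • f k = t * f k := rfl
      rw [hsm, ht] at hlt
      nlinarith [hlt, key, hden]
    -- normalize f
    have hfne : f ≠ 0 := by
      intro h; rw [h] at hfx₀; simp at hfx₀; linarith
    have hfnorm : 0 < ‖f‖ := norm_pos_iff.mpr hfne
    set u : Z →L[ℝ] ℝ := ‖f‖⁻¹ • f with hu
    have huapp : ∀ z : Z, u z = ‖f‖⁻¹ * f z := fun z => rfl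
    have huK : u ∈ {v : Z →L[ℝ] ℝ | ∀ z ∈ K, 0 ≤ v z} := by
      intro z hz
      rw [huapp]
      exact mul_nonneg (by positivity) (hfK z hz)
    have hunorm : ‖u‖ = 1 := norm_smul_inv_norm hfne
    have hsinf := hall u huK hunorm
    -- lower bound on the infimum
    set δ : ℝ := ‖f‖⁻¹ * c with hδ
    have hδ0 : 0 < δ := by positivity
    have hlb : (δ : EReal) ≤ sInf ((fun x => ((u (g x yb) : ℝ) : EReal)) '' X) := by
      apply le_sInf
      rintro b ⟨x, hx, rfl⟩
      have hcx : c < f (g x yb) := hfC _ (hgC x hx)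
      have : δ ≤ u (g x yb) := by
        rw [huapp, hδ]
        have := mul_le_mul_of_nonneg_left hcx.le (le_of_lt (by positivity : (0:ℝ) < ‖f‖⁻¹))
        linarith
      exact EReal.coe_le_coe_iff.mpr this
    have : (δ : EReal) ≤ 0 := hlb.trans hsinf
    have : δ ≤ 0 := by exact_mod_cast this
    linarith
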